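/- arXiv:2111.05751 — 4 statements merged into one kernel-verified Lean document; each statement's English description precedes it below -/
import Mathlib

section
/- There exist an absolute constant c ∈ (0,1) and a threshold p₀ such that: for every prime p ≥ p₀, every positive integer n, every proper multiplicative subgroup Γ of 𝔽_p^* with Γ = −Γ, and every finite set S ⊆ 𝔽_p, there exists a set T ⊆ 𝔽_p with S ⊆ T, |T| ≤ 2^n |S| + n, and |Γ_T| ≤ (1 − c)^n |Γ_S|. -/
open Finset

/-- For a multiplicative subgroup `Γ ≤ 𝔽_p^*` and a finite set `S ⊆ 𝔽_p`,
`Γ_S := Γ ∩ ⋂_{s ∈ S} (Γ − s)`, viewed inside `𝔽_p`. -/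
def gammaShifts {p : ℕ} (Γ : Subgroup (ZMod p)ˣ) (S : Finset (ZMod p)) : Set (ZMod p) :=
  {x | (∃ γ ∈ Γ, ((γ : (ZMod p)ˣ) : ZMod p) = x) ∧
    ∀ s ∈ S, ∃ γ ∈ Γ, ((γ : (ZMod p)ˣ) : ZMod p) = x + s}

lemma mem_gammaShifts_insert {p : ℕ} (Γ : Subgroup (ZMod p)ˣ) (S : Finset (ZMod p))
    (t x : ZMod p) :
    x ∈ gammaShifts Γ (insert t S) ↔
      x ∈ gammaShifts Γ S ∧ ∃ γ ∈ Γ, ((γ : (ZMod p)ˣ) : ZMod p) = x + t := by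
  simp only [gammaShifts, Set.mem_setOf_eq, Finset.forall_mem_insert]
  tauto

lemma key_step {p : ℕ} [Fact p.Prime] (Γ : Subgroup (ZMod p)ˣ) (hΓ : Γ ≠ ⊤)
    (S : Finset (ZMod p)) :
    ∃ t : ZMod p, 2 * (gammaShifts Γ (insert t S)).ncard ≤ (gammaShifts Γ S).ncard := by
  classical
  have hA : (gammaShifts Γ S).Finite := Set.toFinite _
  set A : Finset (ZMod p) := hA.toFinset with hAdef
  set G : Finset (ZMod p) :=
    (Finset.univ : Finset Γ).image (fun γ : Γ => ((γ : (ZMod p)ˣ) : ZMod p)) with hGdef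
  have hmemG : ∀ x : ZMod p, x ∈ G ↔ ∃ γ ∈ Γ, ((γ : (ZMod p)ˣ) : ZMod p) = x := by
    intro x
    simp only [hGdef, Finset.mem_image, Finset.mem_univ, true_and]
    constructor
    · rintro ⟨⟨γ, hγ⟩, hx⟩; exact ⟨γ, hγ, hx⟩
    · rintro ⟨γ, hγ, hx⟩; exact ⟨⟨γ, hγ⟩, hx⟩
  have hGcard : G.card = Nat.card Γ := by
    rw [hGdef, Finset.card_image_of_injective _
      (fun a b hab => Subtype.ext (Units.ext hab)), Finset.card_univ, Nat.card_eq_fintype_card]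
  have hGsmall : 2 * G.card ≤ p - 1 := by
    have hdvd : Nat.card Γ ∣ Nat.card (ZMod p)ˣ := Subgroup.card_subgroup_dvd_card Γ
    have hne : Nat.card Γ ≠ Nat.card (ZMod p)ˣ := fun h => hΓ (Subgroup.eq_top_of_card_eq Γ h)
    have hcards : Nat.card (ZMod p)ˣ = p - 1 := by
      rw [Nat.card_eq_fintype_card, ZMod.card_units]
    have hpos : 0 < Nat.card Γ := Nat.card_pos
    have hp2 : 2 ≤ p := (Fact.out : p.Prime).two_le
    rw [hcards] at hdvd hne
    obtain ⟨k, hk⟩ := hdvd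
    have hk0 : k ≠ 0 := by rintro rfl; omega
    have hk1 : k ≠ 1 := by rintro rfl; rw [mul_one] at hk; omega
    have h2k : 2 ≤ k := by omega
    have : Nat.card Γ * 2 ≤ Nat.card Γ * k := Nat.mul_le_mul_left _ h2k
    omega
  have hfilter : ∀ t : ZMod p, (gammaShifts Γ (insert t S)).Finite := fun _ => Set.toFinite _
  have hfin : ∀ t : ZMod p,
      (gammaShifts Γ (insert t S)).ncard = (A.filter (fun x => x + t ∈ G)).card := by
    intro t
    rw [Set.ncard_eq_toFinset_card _ (hfilter t)]
    congr 1
    ext x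
    rw [Set.Finite.mem_toFinset, mem_gammaShifts_insert, Finset.mem_filter,
      hAdef, Set.Finite.mem_toFinset, hmemG]
  have hsum : ∑ t : ZMod p, (A.filter (fun x => x + t ∈ G)).card = A.card * G.card := by
    have h1 : ∀ t : ZMod p, (A.filter (fun x => x + t ∈ G)).card
        = ∑ x ∈ A, if x + t ∈ G then 1 else 0 := by
      intro t; rw [Finset.card_filter]
    simp only [h1]
    rw [Finset.sum_comm]
    have h2 : ∀ x : ZMod p, (∑ t : ZMod p, if x + t ∈ G then 1 else 0) = G.card := by
      intro x
      rw [← Finset.card_filter]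
      have : (Finset.univ.filter (fun t => x + t ∈ G))
          = G.map ⟨fun g => g - x, fun a b h => by simpa using h⟩ := by
        ext t
        simp only [Finset.mem_filter, Finset.mem_univ, true_and, Finset.mem_map,
          Function.Embedding.coeFn_mk]
        constructor
        · intro h; exact ⟨x + t, h, by show x + t - x = t; ring⟩
        · rintro ⟨g, hg, rfl⟩; show x + (g - x) ∈ G; simpa using hg
      rw [this, Finset.card_map]
    simp only [h2, Finset.sum_const, smul_eq_mul, mul_one]
  by_contra hcon
  push_neg at hcon
  have hAcard : (gammaShifts Γ S).ncard = A.card := Set.ncard_eq_toFinset_card _ hA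
  have hbound : ∀ t : ZMod p, A.card + 1 ≤ 2 * (A.filter (fun x => x + t ∈ G)).card := by
    intro t
    have := hcon t
    rw [hfin t, hAcard] at this
    omega
  have hp2 : 2 ≤ p := (Fact.out : p.Prime).two_le
  have hsum2 : p * (A.card + 1) ≤ 2 * (A.card * G.card) := by
    calc p * (A.card + 1) = ∑ _t : ZMod p, (A.card + 1) := by
          rw [Finset.sum_const, Finset.card_univ, ZMod.card, smul_eq_mul]
      _ ≤ ∑ t : ZMod p, 2 * (A.filter (fun x => x + t ∈ G)).card :=
          Finset.sum_le_sum (fun t _ => hbound t)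
      _ = 2 * (A.card * G.card) := by rw [← Finset.mul_sum, hsum]
  have hub : 2 * (A.card * G.card) ≤ A.card * (p - 1) := by
    calc 2 * (A.card * G.card) = A.card * (2 * G.card) := by ring
      _ ≤ A.card * (p - 1) := Nat.mul_le_mul_left _ hGsmall
  have hlt : A.card * (p - 1) < p * (A.card + 1) := by
    have h1 : A.card * (p - 1) ≤ A.card * p := Nat.mul_le_mul_left _ (Nat.sub_le _ _)
    have h2 : A.card * p < p * (A.card + 1) := by
      rw [mul_comm p (A.card + 1)]
      exact Nat.mul_lt_mul_of_lt_of_le (by omega) le_rfl (by omega)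
    omega
  omega

lemma iter_step {p : ℕ} [Fact p.Prime] (Γ : Subgroup (ZMod p)ˣ) (hΓ : Γ ≠ ⊤)
    (S : Finset (ZMod p)) (n : ℕ) :
    ∃ T : Finset (ZMod p), S ⊆ T ∧ T.card ≤ S.card + n ∧
      2 ^ n * (gammaShifts Γ T).ncard ≤ (gammaShifts Γ S).ncard := by
  induction n with
  | zero => exact ⟨S, subset_rfl, by omega, by simp⟩
  | succ n ih =>
    obtain ⟨T, hST, hcard, hle⟩ := ih
    obtain ⟨t, ht⟩ := key_step Γ hΓ T
    refine ⟨insert t T, hST.trans (Finset.subset_insert _ _), ?_, ?_⟩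
    · have := Finset.card_insert_le t T; omega
    · calc 2 ^ (n + 1) * (gammaShifts Γ (insert t T)).ncard
          = 2 ^ n * (2 * (gammaShifts Γ (insert t T)).ncard) := by ring
        _ ≤ 2 ^ n * (gammaShifts Γ T).ncard := Nat.mul_le_mul_left _ ht
        _ ≤ _ := hle

theorem stmt_3 :
    ∃ c : ℝ, 0 < c ∧ c < 1 ∧ ∃ p₀ : ℕ, ∀ (p : ℕ) [Fact p.Prime], p₀ ≤ p →
      ∀ n : ℕ, 0 < n →
        ∀ Γ : Subgroup (ZMod p)ˣ, Γ ≠ ⊤ → (∀ x : (ZMod p)ˣ, x ∈ Γ → -x ∈ Γ) →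
          ∀ S : Finset (ZMod p), ∃ T : Finset (ZMod p),
            S ⊆ T ∧ T.card ≤ 2 ^ n * S.card + n ∧
            ((gammaShifts Γ T).ncard : ℝ) ≤ (1 - c) ^ n * (gammaShifts Γ S).ncard := by
  refine ⟨1/2, by norm_num, by norm_num, 2, ?_⟩
  intro p _ _ n _ Γ hΓ _ S
  obtain ⟨T, hST, hcard, hle⟩ := iter_step Γ hΓ S n
  refine ⟨T, hST, ?_, ?_⟩
  · have : S.card ≤ 2 ^ n * S.card := Nat.le_mul_of_pos_left _ (by positivity)
    omega
  · have hcast : (2 : ℝ) ^ n * (gammaShifts Γ T).ncard ≤ (gammaShifts Γ S).ncard := by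
      exact_mod_cast hle
    have h2n : (0 : ℝ) < 2 ^ n := by positivity
    rw [show (1 : ℝ) - 1/2 = 1/2 by norm_num, div_pow, one_pow, div_mul_eq_mul_div,
      le_div_iff₀ h2n, one_mul]
    linarith
end

section
/- Let s, t ∈ ℤ[i] be Gaussian integers with complex absolute values |s| ≥ 2 and |t| ≥ 2, and let u_s^* = (1, 0; s, 1) and u_t = (1, t; 0, 1) in SL₂(ℤ[i]). Then the group homomorphism φ from the free group on two generators to SL₂(ℤ[i]) sending the first generator to u_s^* and the second to u_t is injective; moreover, for every non-identity element w of the free group, φ(w) is not a scalar matrix (i.e., φ(w) ≠ λ·I for every λ ∈ ℤ[i]). In particular, the subgroup of SL₂(ℤ[i]) generated by u_s^* and u_t is free of rank 2. -/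
open scoped ComplexConjugate

/-- The lower unipotent matrix `u_s^* = (1, 0; s, 1)` in `SL₂(ℤ[i])`. -/
def lowerUnip (s : GaussianInt) : Matrix.SpecialLinearGroup (Fin 2) GaussianInt :=
  ⟨!![1, 0; s, 1], by simp [Matrix.det_fin_two_of]⟩

/-- The upper unipotent matrix `u_t = (1, t; 0, 1)` in `SL₂(ℤ[i])`. -/
def upperUnip (t : GaussianInt) : Matrix.SpecialLinearGroup (Fin 2) GaussianInt :=
  ⟨!![1, t; 0, 1], by simp [Matrix.det_fin_two_of]⟩

namespace PingPongAux

open Pointwise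

abbrev SL2 := Matrix.SpecialLinearGroup (Fin 2) GaussianInt

noncomputable def A (z : GaussianInt) : ℝ := ‖GaussianInt.toComplex z‖

lemma A_nonneg (z : GaussianInt) : 0 ≤ A z := norm_nonneg _

lemma A_mul (a b : GaussianInt) : A (a * b) = A a * A b := by
  simp [A, map_mul]

lemma A_neg (a : GaussianInt) : A (-a) = A a := by simp [A, map_neg]

lemma A_add_le (a b : GaussianInt) : A (a + b) ≤ A a + A b := by
  simpa [A, map_add] using norm_add_le (GaussianInt.toComplex a) (GaussianInt.toComplex b)

lemma A_one : A 1 = 1 := by simp [A]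

lemma A_zero : A 0 = 0 := by simp [A]

lemma one_le_A_intCast {n : ℤ} (hn : n ≠ 0) : 1 ≤ A (n : GaussianInt) := by
  have h : ((n : GaussianInt) : ℂ) = (n : ℂ) := map_intCast GaussianInt.toComplex n
  rw [A, h, Complex.norm_intCast]
  exact_mod_cast Int.one_le_abs (by exact_mod_cast hn)

/-- lower bound: `A a * A b - A c ≤ A (a*b + c)`. -/
lemma A_lower (a b c : GaussianInt) : A a * A b - A c ≤ A (a * b + c) := by
  have h := A_add_le (a * b + c) (-c)
  rw [A_neg] at h
  simp only [add_neg_cancel_right] at h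
  rw [A_mul] at h
  linarith

/-- Vectors mod `±1`. -/
def pm : Setoid (Fin 2 → GaussianInt) where
  r v w := w = v ∨ w = -v
  iseqv := by
    refine ⟨fun v => Or.inl rfl, ?_, ?_⟩
    · rintro v w (rfl | rfl)
      · exact Or.inl rfl
      · right; simp
    · rintro u v w (rfl | rfl) (rfl | rfl) <;> simp

abbrev PMVec := Quotient pm

instance : MulAction SL2 PMVec where
  smul g := Quotient.map (fun v => (g : Matrix (Fin 2) (Fin 2) GaussianInt).mulVec v)
    (by
      rintro v w (rfl | rfl)
      · exact Or.inl rfl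
      · right; simp [Matrix.mulVec_neg])
  one_smul p := by
    induction p using Quotient.inductionOn with
    | h v => exact congrArg (Quotient.mk pm) (Matrix.one_mulVec v)
  mul_smul g h p := by
    induction p using Quotient.inductionOn with
    | h v =>
      exact congrArg (Quotient.mk pm) (by
        show ((g * h : SL2) : Matrix (Fin 2) (Fin 2) GaussianInt).mulVec v = _
        rw [Matrix.SpecialLinearGroup.coe_mul, ← Matrix.mulVec_mulVec])

lemma smul_mk (g : SL2) (v : Fin 2 → GaussianInt) :
    g • (Quotient.mk pm v : PMVec)
      = Quotient.mk pm ((g : Matrix (Fin 2) (Fin 2) GaussianInt).mulVec v) :=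
  rfl

/-- The ping-pong sets. -/
def Xset : Bool → Set PMVec := fun b =>
  {p | Quotient.liftOn p (fun v => if b then A (v 0) < A (v 1) else A (v 1) < A (v 0))
    (by
      rintro v w (rfl | rfl)
      · rfl
      · simp [A_neg])}

lemma mem_Xset_mk (b : Bool) (v : Fin 2 → GaussianInt) :
    (Quotient.mk pm v : PMVec) ∈ Xset b ↔ if b then A (v 0) < A (v 1) else A (v 1) < A (v 0) :=
  Iff.rfl

lemma Xset_nonempty (b : Bool) : (Xset b).Nonempty := by
  cases b
  · refine ⟨Quotient.mk pm ![1, 0], ?_⟩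
    rw [mem_Xset_mk]
    norm_num [A_one, A_zero]
  · refine ⟨Quotient.mk pm ![0, 1], ?_⟩
    rw [mem_Xset_mk]
    norm_num [A_one, A_zero]

lemma Xset_disjoint : Pairwise (Function.onFun Disjoint Xset) := by
  intro i j hij
  rw [Function.onFun, Set.disjoint_left]
  intro p hvi hvj
  induction p using Quotient.inductionOn with
  | h v =>
    rw [mem_Xset_mk] at hvi hvj
    cases i <;> cases j <;> simp_all <;> linarith

lemma lowerUnip_mul (a b : GaussianInt) : lowerUnip a * lowerUnip b = lowerUnip (a + b) := by
  apply Subtype.ext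
  show (!![1, 0; a, 1] : Matrix (Fin 2) (Fin 2) GaussianInt) * !![1, 0; b, 1] = !![1, 0; a + b, 1]
  rw [Matrix.mul_fin_two]
  ring_nf

lemma upperUnip_mul (a b : GaussianInt) : upperUnip a * upperUnip b = upperUnip (a + b) := by
  apply Subtype.ext
  show (!![1, a; 0, 1] : Matrix (Fin 2) (Fin 2) GaussianInt) * !![1, b; 0, 1] = !![1, a + b; 0, 1]
  rw [Matrix.mul_fin_two]
  ring_nf

lemma lowerUnip_zero : lowerUnip 0 = 1 := by
  apply Subtype.ext
  show (!![1, 0; 0, 1] : Matrix (Fin 2) (Fin 2) GaussianInt) = 1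
  simp [Matrix.one_fin_two]

lemma upperUnip_zero : upperUnip 0 = 1 := by
  apply Subtype.ext
  show (!![1, 0; 0, 1] : Matrix (Fin 2) (Fin 2) GaussianInt) = 1
  simp [Matrix.one_fin_two]

lemma lowerUnip_inv (a : GaussianInt) : (lowerUnip a)⁻¹ = lowerUnip (-a) := by
  apply inv_eq_of_mul_eq_one_right
  rw [lowerUnip_mul]
  simp [lowerUnip_zero]

lemma upperUnip_inv (a : GaussianInt) : (upperUnip a)⁻¹ = upperUnip (-a) := by
  apply inv_eq_of_mul_eq_one_right
  rw [upperUnip_mul]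
  simp [upperUnip_zero]

lemma lowerUnip_zpow (s : GaussianInt) (n : ℤ) : lowerUnip s ^ n = lowerUnip (n * s) := by
  induction n using Int.induction_on with
  | zero => simp [lowerUnip_zero]
  | succ k ih =>
    rw [zpow_add_one, ih, lowerUnip_mul]
    congr 1
    push_cast
    ring
  | pred k ih =>
    rw [zpow_sub_one, ih, lowerUnip_inv, lowerUnip_mul]
    congr 1
    push_cast
    ring

lemma upperUnip_zpow (t : GaussianInt) (n : ℤ) : upperUnip t ^ n = upperUnip (n * t) := by
  induction n using Int.induction_on with
  | zero => simp [upperUnip_zero]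
  | succ k ih =>
    rw [zpow_add_one, ih, upperUnip_mul]
    congr 1
    push_cast
    ring
  | pred k ih =>
    rw [zpow_sub_one, ih, upperUnip_inv, upperUnip_mul]
    congr 1
    push_cast
    ring

lemma lowerUnip_mulVec (m : GaussianInt) (v : Fin 2 → GaussianInt) :
    ((lowerUnip m : SL2) : Matrix (Fin 2) (Fin 2) GaussianInt).mulVec v
      = ![v 0, m * v 0 + v 1] := by
  funext i
  fin_cases i <;>
    simp [lowerUnip, Matrix.mulVec, dotProduct, Fin.sum_univ_two]

lemma upperUnip_mulVec (m : GaussianInt) (v : Fin 2 → GaussianInt) :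
    ((upperUnip m : SL2) : Matrix (Fin 2) (Fin 2) GaussianInt).mulVec v
      = ![v 0 + m * v 1, v 1] := by
  funext i
  fin_cases i <;>
    simp [upperUnip, Matrix.mulVec, dotProduct, Fin.sum_univ_two]

lemma lower_smul_mem {m : GaussianInt} (hm : 2 ≤ A m) {p : PMVec} (hp : p ∈ Xset false) :
    lowerUnip m • p ∈ Xset true := by
  induction p using Quotient.inductionOn with
  | h v =>
    rw [mem_Xset_mk] at hp
    rw [smul_mk, lowerUnip_mulVec, mem_Xset_mk]
    simp only [if_true, if_false, Bool.false_eq_true, Matrix.cons_val_zero, Matrix.cons_val_one,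
      Matrix.head_cons] at *
    have h1 : A m * A (v 0) - A (v 1) ≤ A (m * v 0 + v 1) := A_lower m (v 0) (v 1)
    have h0 : 0 ≤ A (v 0) := A_nonneg _
    have h2 : 2 * A (v 0) ≤ A m * A (v 0) := by nlinarith
    linarith

lemma upper_smul_mem {m : GaussianInt} (hm : 2 ≤ A m) {p : PMVec} (hp : p ∈ Xset true) :
    upperUnip m • p ∈ Xset false := by
  induction p using Quotient.inductionOn with
  | h v =>
    rw [mem_Xset_mk] at hp
    rw [smul_mk, upperUnip_mulVec, mem_Xset_mk]
    simp only [if_true, if_false, Bool.false_eq_true, Matrix.cons_val_zero, Matrix.cons_val_one,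
      Matrix.head_cons] at *
    have h1 : A m * A (v 1) - A (v 0) ≤ A (m * v 1 + v 0) := A_lower m (v 1) (v 0)
    have h0 : 0 ≤ A (v 1) := A_nonneg _
    have h2 : 2 * A (v 1) ≤ A m * A (v 1) := by nlinarith
    have hcomm : A (v 0 + m * v 1) = A (m * v 1 + v 0) := by rw [add_comm]
    linarith

lemma two_le_A_int_mul {m : GaussianInt} (hm : 2 ≤ A m) {n : ℤ} (hn : n ≠ 0) :
    2 ≤ A ((n : GaussianInt) * m) := by
  rw [A_mul]
  have h1 := one_le_A_intCast hn
  nlinarith [A_nonneg m]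

open Monoid Cardinal in
theorem key_injective {s t : GaussianInt} (hs : 2 ≤ A s) (ht : 2 ≤ A t) :
    Function.Injective
      (FreeGroup.lift fun (b : Bool) =>
        MulAction.toPermHom SL2 PMVec (if b then lowerUnip s else upperUnip t)) := by
  set π := MulAction.toPermHom SL2 PMVec with hπ
  set g : Bool → SL2 := fun b => if b then lowerUnip s else upperUnip t with hg
  set a : Bool → Equiv.Perm PMVec := fun b => π (g b) with ha
  have hstep : (FreeGroup.lift fun (b : Bool) => π (g b)) =
      (Monoid.CoprodI.lift fun i : Bool => FreeGroup.lift fun _ : Unit => a i).comp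
        (@freeGroupEquivCoprodI Bool).toMonoidHom := by
    ext i
    simp [a]
  show Function.Injective (FreeGroup.lift fun (b : Bool) => π (g b))
  rw [hstep, MonoidHom.coe_comp]
  refine Function.Injective.comp ?_ (MulEquiv.injective freeGroupEquivCoprodI)
  let H : Bool → Type := fun _ => FreeGroup Unit
  let f : ∀ i, H i →* Equiv.Perm PMVec := fun i => FreeGroup.lift fun _ => a i
  apply Monoid.CoprodI.lift_injective_of_ping_pong f _ Xset
  · exact Xset_nonempty
  · exact Xset_disjoint
  · intro i j hij
    refine FreeGroup.freeGroupUnitEquivInt.forall_congr_left.mpr ?_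
    intro n hne1
    change FreeGroup.lift (fun _ => a i) (FreeGroup.of () ^ n) • Xset j ⊆ Xset i
    simp only [map_zpow, FreeGroup.lift_apply_of]
    have hnne0 : n ≠ 0 := by
      rintro rfl
      apply hne1
      simp [H, FreeGroup.freeGroupUnitEquivInt]
    rintro x ⟨y, hy, rfl⟩
    have hact : (a i ^ n) • y = (g i ^ n) • y := by
      rw [ha]
      show (π (g i) ^ n) • y = _
      rw [← map_zpow]
      rfl
    show (a i ^ n) • y ∈ Xset i
    rw [hact]
    cases i <;> cases j
    · exact absurd rfl hij
    · show ((if false then lowerUnip s else upperUnip t) ^ n) • y ∈ Xset false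
      rw [if_neg (by simp), upperUnip_zpow]
      exact upper_smul_mem (two_le_A_int_mul ht hnne0) hy
    · show ((if true then lowerUnip s else upperUnip t) ^ n) • y ∈ Xset true
      rw [if_pos rfl, lowerUnip_zpow]
      exact lower_smul_mem (two_le_A_int_mul hs hnne0) hy
    · exact absurd rfl hij
  · right
    refine ⟨true, ?_⟩
    rw [FreeGroup.freeGroupUnitEquivInt.cardinal_eq, Cardinal.mk_denumerable]
    exact le_of_lt (nat_lt_aleph0 3)

end PingPongAux

open PingPongAux in
theorem stmt_4 (s t : GaussianInt)
    (hs : 2 ≤ ‖GaussianInt.toComplex s‖)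
    (ht : 2 ≤ ‖GaussianInt.toComplex t‖)
    (φ : FreeGroup Bool →* Matrix.SpecialLinearGroup (Fin 2) GaussianInt)
    (hφ : φ = FreeGroup.lift (fun b => if b then lowerUnip s else upperUnip t)) :
    Function.Injective φ ∧
      ∀ w : FreeGroup Bool, w ≠ 1 → ∀ lam : GaussianInt,
        ((φ w : Matrix.SpecialLinearGroup (Fin 2) GaussianInt) : Matrix (Fin 2) (Fin 2) GaussianInt)
          ≠ lam • (1 : Matrix (Fin 2) (Fin 2) GaussianInt) := by
  have hs' : 2 ≤ A s := hs
  have ht' : 2 ≤ A t := ht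
  set π := MulAction.toPermHom SL2 PMVec with hπ
  have hcomp : π.comp φ =
      FreeGroup.lift fun (b : Bool) => π (if b then lowerUnip s else upperUnip t) := by
    subst hφ
    ext b
    simp
  have hkey : Function.Injective (π.comp φ) := by
    rw [hcomp]
    exact key_injective hs' ht'
  have hinj : Function.Injective φ := fun x y h => hkey (by simp [MonoidHom.comp_apply, h])
  refine ⟨hinj, ?_⟩
  intro w hw lam heq
  have hdet : (1 : GaussianInt) = lam ^ 2 := by
    have h1 : ((φ w : Matrix.SpecialLinearGroup (Fin 2) GaussianInt)
        : Matrix (Fin 2) (Fin 2) GaussianInt).det = 1 := (φ w).2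
    rw [heq, Matrix.det_smul, Matrix.det_one] at h1
    simpa [Fintype.card_fin] using h1.symm
  have hlam : lam = 1 ∨ lam = -1 := by
    have h : (lam - 1) * (lam + 1) = 0 := by linear_combination -hdet
    rcases mul_eq_zero.mp h with h | h
    · left; exact sub_eq_zero.mp h
    · right; exact eq_neg_of_add_eq_zero_left h
  rcases hlam with rfl | rfl
  · refine hw (hinj ?_)
    rw [map_one]
    apply Subtype.ext
    simpa using heq
  · refine hw (hkey ?_)
    rw [map_one, MonoidHom.comp_apply]
    show π (φ w) = 1
    ext q
    show (φ w) • q = q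
    induction q using Quotient.inductionOn with
    | h v =>
      rw [smul_mk, heq, Matrix.smul_mulVec, Matrix.one_mulVec]
      apply Quotient.sound
      right
      simp
end

section
/- Let p be a prime, Γ ≤ 𝔽_p^* a multiplicative subgroup, k ≥ 2 an integer, and g = (a, b; c, d) ∈ GL₂(𝔽_p) with c ≠ 0. Let α₁, …, α_k ∈ 𝔽_p^* and β₁, …, β_k ∈ 𝔽_p satisfy β₁ = −d/c and c·β_j + d ≠ 0 for all j ∈ {2, …, k}. Then the Möbius image of Γ_{α₁,…,α_k; β₁,…,β_k} under g equals Γ_{γ₁,…,γ_k; β'₁,…,β'_k}, where β'₁ = a/c, β'_j = (a·β_j + b)/(c·β_j + d) for j ≥ 2, γ₁ = −det(g)/(c²·α₁), and γ_j = α_j·det(g)/(α₁·c·(c·β_j + d)) for j ≥ 2. -/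
/-- The intersection of dilated-shifted copies of a multiplicative subgroup:
`Γ_{α₁,…,α_k; β₁,…,β_k} := (α₁Γ + β₁) ∩ ⋯ ∩ (α_kΓ + β_k)`, viewed inside `𝔽_p`. -/
def shiftedInter {p : ℕ} (Γ : Subgroup (ZMod p)ˣ) {k : ℕ} (α β : Fin k → ZMod p) :
    Set (ZMod p) :=
  {x | ∀ j, ∃ γ ∈ Γ, x = α j * ((γ : (ZMod p)ˣ) : ZMod p) + β j}

/-- Here the number of shifts is `k = m + 2 ≥ 2`, with indices `0, 1, …, k − 1`;
the index `0` plays the role of the index `1` in the paper. -/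
theorem stmt_17 (p : ℕ) [Fact p.Prime] (Γ : Subgroup (ZMod p)ˣ) (m : ℕ)
    (M : Matrix (Fin 2) (Fin 2) (ZMod p)) (hdet : M.det ≠ 0) (hc : M 1 0 ≠ 0)
    (α β : Fin (m + 2) → ZMod p) (hα : ∀ j, α j ≠ 0)
    (hβ0 : β 0 = -(M 1 1) / M 1 0)
    (hβ : ∀ j : Fin (m + 2), j ≠ 0 → M 1 0 * β j + M 1 1 ≠ 0) :
    (fun x => (M 0 0 * x + M 0 1) / (M 1 0 * x + M 1 1)) '' shiftedInter Γ α β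
      = shiftedInter Γ
          (fun j => if j = 0 then -M.det / (M 1 0 ^ 2 * α 0)
            else α j * M.det / (α 0 * M 1 0 * (M 1 0 * β j + M 1 1)))
          (fun j => if j = 0 then M 0 0 / M 1 0
            else (M 0 0 * β j + M 0 1) / (M 1 0 * β j + M 1 1)) := by
  have hD2 : M.det = M 0 0 * M 1 1 - M 0 1 * M 1 0 := Matrix.det_fin_two M
  have hα0 := hα 0
  have hDne : M 0 0 * M 1 1 - M 0 1 * M 1 0 ≠ 0 := hD2 ▸ hdet
  ext y
  simp only [Set.mem_image, shiftedInter, Set.mem_setOf_eq]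
  constructor
  · rintro ⟨x, hx, rfl⟩
    obtain ⟨γ0, hγ0, hx0⟩ := hx 0
    have hγ0ne : ((γ0 : (ZMod p)ˣ) : ZMod p) ≠ 0 := Units.ne_zero γ0
    have hcx : M 1 0 * x + M 1 1 = M 1 0 * α 0 * γ0 := by
      rw [hx0, hβ0]; field_simp; ring
    intro j
    rcases eq_or_ne j 0 with hj | hj
    · subst hj
      refine ⟨γ0⁻¹, inv_mem hγ0, ?_⟩
      simp only [if_pos rfl, ↓reduceIte, Units.val_inv_eq_inv_val]
      rw [hcx, hx0, hβ0, hD2]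
      field_simp
      ring
    · obtain ⟨γj, hγj, hxj⟩ := hx j
      have hγjne : ((γj : (ZMod p)ˣ) : ZMod p) ≠ 0 := Units.ne_zero γj
      refine ⟨γj * γ0⁻¹, mul_mem hγj (inv_mem hγ0), ?_⟩
      simp only [if_neg hj, Units.val_mul, Units.val_inv_eq_inv_val]
      rw [hxj] at hcx
      rw [hxj, hcx, hD2]
      have hβj := hβ j hj
      field_simp
      rw [eq_div_iff (by rwa [mul_comm] at hβj)]
      linear_combination (M 0 0 * β j + M 0 1) * hcx
  · intro hy
    obtain ⟨γ0, hγ0, hy0⟩ := hy 0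
    simp only [reduceIte] at hy0
    have hγ0ne : ((γ0 : (ZMod p)ˣ) : ZMod p) ≠ 0 := Units.ne_zero γ0
    refine ⟨α 0 * ((γ0⁻¹ : (ZMod p)ˣ) : ZMod p) + β 0, ?_, ?_⟩
    · intro j
      rcases eq_or_ne j 0 with hj | hj
      · exact hj ▸ ⟨γ0⁻¹, inv_mem hγ0, rfl⟩
      · obtain ⟨γj, hγj, hyj⟩ := hy j
        simp only [if_neg hj] at hyj
        have hγjne : ((γj : (ZMod p)ˣ) : ZMod p) ≠ 0 := Units.ne_zero γj
        have hβj := hβ j hj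
        refine ⟨γj * γ0⁻¹, mul_mem hγj (inv_mem hγ0), ?_⟩
        simp only [Units.val_mul, Units.val_inv_eq_inv_val]
        have heq := hy0.symm.trans hyj
        rw [hD2] at heq
        field_simp at heq
        have key : α 0 * M 1 0 - M 1 1 * ↑γ0 = α j * M 1 0 * ↑γj + β j * M 1 0 * ↑γ0 := by
          have hF : (M 0 0 * M 1 1 - M 0 1 * M 1 0) * (M 1 0 ^ 2 * α 0 * (M 1 0 * β j + M 1 1)) ≠ 0 :=
            mul_ne_zero hDne (mul_ne_zero (mul_ne_zero (pow_ne_zero 2 hc) hα0) hβj)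
          apply mul_left_cancel₀ hF
          linear_combination (M 1 0 ^ 2 * α 0 * (M 1 0 * β j + M 1 1)) * heq
        rw [hβ0]
        field_simp
        linear_combination key
    · have hcx2 : M 1 0 * (α 0 * ((γ0⁻¹ : (ZMod p)ˣ) : ZMod p) + β 0) + M 1 1
          = M 1 0 * α 0 * ((γ0 : (ZMod p)ˣ) : ZMod p)⁻¹ := by
        rw [hβ0, Units.val_inv_eq_inv_val]; field_simp; ring
      show (M 0 0 * _ + M 0 1) / (M 1 0 * _ + M 1 1) = y
      rw [hcx2, hy0, hβ0, hD2, Units.val_inv_eq_inv_val]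
      field_simp
      ring
end

section
/- There exist an absolute constant c > 0 and a threshold H₀ such that: for every prime p and all positive integers H, H_*, a with H₀ ≤ H_* ≤ H, a + H < p, and 16·H_*²·H < p, one has |{ y·(a + x)^{−1} ∈ 𝔽_p : x ∈ [H], y ∈ [H_*] }| ≥ c · H_* · H. -/
open Finset
open scoped Classical
lemma sub_one_le_of_le_add_one {a b : ℕ} (h : a ≤ b + 1) : a - 1 ≤ b := by omega

lemma ge32_of_le_add_one {a b : ℕ} (h33 : 33 ≤ a) (h : a ≤ b + 1) : 32 ≤ b := by omega

lemma gap_card {α : Type*} (S : Finset α) (g : α → ℕ) (s M : ℕ) (hs : 0 < s)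
    (hmem : ∀ x ∈ S, 1 ≤ g x ∧ g x ≤ M)
    (hgap : ∀ x ∈ S, ∀ y ∈ S, x ≠ y → g x + s ≤ g y ∨ g y + s ≤ g x) :
    S.card ≤ (M - 1) / s + 1 := by
  classical
  have h : S.card ≤ (Finset.Icc 0 ((M - 1) / s)).card := by
    apply Finset.card_le_card_of_injOn (fun x => (g x - 1) / s)
    · intro x hx
      simp only [Finset.coe_Icc, Set.mem_Icc, Finset.mem_Icc]
      exact ⟨Nat.zero_le _, Nat.div_le_div_right (by have := hmem x hx; omega)⟩
    · intro x hx y hy hxy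
      by_contra hne
      have key : ∀ u ∈ S, ∀ w ∈ S, g u + s ≤ g w → (g u - 1) / s < (g w - 1) / s := by
        intro u hu w hw huw
        have h1 : g u - 1 + s ≤ g w - 1 := by have := (hmem u hu).1; omega
        calc (g u - 1) / s < (g u - 1) / s + 1 := Nat.lt_succ_self _
          _ = (g u - 1 + s) / s := (Nat.add_div_right _ hs).symm
          _ ≤ (g w - 1) / s := Nat.div_le_div_right h1
      rcases hgap x hx y hy hne with h' | h'
      · exact absurd hxy (Nat.ne_of_lt (key x hx y hy h'))
      · exact absurd hxy.symm (Nat.ne_of_lt (key y hy x hx h'))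
  simpa using h

lemma sum_one_div_sqrt (n : ℕ) :
    ∑ s ∈ Finset.Icc 1 n, (1 / Real.sqrt s) ≤ 2 * Real.sqrt n := by
  induction n with
  | zero => simp
  | succ n ih =>
    have hins : Finset.Icc 1 (n + 1) = insert (n + 1) (Finset.Icc 1 n) := by
      ext x; simp [Finset.mem_Icc, Finset.mem_insert]; omega
    rw [hins, Finset.sum_insert (by simp)]
    have ha : Real.sqrt (n + 1) ^ 2 = (n : ℝ) + 1 := Real.sq_sqrt (by positivity)
    have hb : Real.sqrt n ^ 2 = (n : ℝ) := Real.sq_sqrt (by positivity)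
    have hao : 0 < Real.sqrt ((n : ℝ) + 1) := Real.sqrt_pos.2 (by positivity)
    have hbo : 0 ≤ Real.sqrt (n : ℝ) := Real.sqrt_nonneg _
    have key : 1 / Real.sqrt ((n : ℝ) + 1) ≤ 2 * Real.sqrt ((n : ℝ) + 1) - 2 * Real.sqrt n := by
      rw [div_le_iff₀ hao]
      nlinarith [sq_nonneg (Real.sqrt ((n:ℝ)+1) - Real.sqrt n), sq_nonneg (Real.sqrt ((n:ℝ)+1) + Real.sqrt n)]
    have : ((n : ℝ) + 1) = ((n + 1 : ℕ) : ℝ) := by push_cast; ring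
    push_cast
    linarith [ih]

lemma class_lemma (p H K a : ℕ) [Fact p.Prime] (v : ZMod p) (F : Finset (ℕ × ℕ))
    (hcoord : ∀ q ∈ F, 1 ≤ q.1 ∧ q.1 ≤ H ∧ 1 ≤ q.2 ∧ q.2 ≤ K)
    (heq : ∀ q ∈ F, ((q.2 : ℕ) : ZMod p) = v * ((a + q.1 : ℕ) : ZMod p))
    (hHp : H < p) (hKp : K < p) (hap : a + H < p) (h2 : 2 * H * K < p) (hv : v ≠ 0)
    (hr : 2 ≤ F.card) :
    ∃ s : ℕ, ∃ t : ℤ, 0 < s ∧ s < H ∧ t ≠ 0 ∧ ((t : ZMod p) = v * (s : ℕ)) ∧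
      F.card ≤ (H - 1) / s + 1 ∧ F.card ≤ (K - 1) / t.natAbs + 1 := by
  have hp : p.Prime := Fact.out
  -- distinct points have distinct coordinates
  have hxinj : ∀ A ∈ F, ∀ B ∈ F, A.1 = B.1 → A = B := by
    intro A hA B hB h1
    have e1 := heq A hA
    have e2 := heq B hB
    rw [h1] at e1
    rw [← e2] at e1
    have : A.2 = B.2 := by
      have := congrArg ZMod.val e1
      rwa [ZMod.val_cast_of_lt (by have h1 := hcoord A hA; have h2 := hcoord B hB; omega),
        ZMod.val_cast_of_lt (by have h1 := hcoord A hA; have h2 := hcoord B hB; omega)] at this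
    exact Prod.ext h1 this
  have hyinj : ∀ A ∈ F, ∀ B ∈ F, A.2 = B.2 → A = B := by
    intro A hA B hB h2'
    have e1 := heq A hA
    have e2 := heq B hB
    rw [h2', e2] at e1
    have e3 : ((a + B.1 : ℕ) : ZMod p) = ((a + A.1 : ℕ) : ZMod p) :=
      mul_left_cancel₀ hv e1
    have : a + B.1 = a + A.1 := by
      have := congrArg ZMod.val e3
      rwa [ZMod.val_cast_of_lt (by have h1 := hcoord A hA; have h2 := hcoord B hB; omega),
        ZMod.val_cast_of_lt (by have h1 := hcoord A hA; have h2 := hcoord B hB; omega)] at this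
    exact Prod.ext (by omega) h2'
  -- collinearity (cross product vanishes over ℤ)
  have hcross : ∀ A ∈ F, ∀ B ∈ F, ∀ P ∈ F, ∀ Q ∈ F,
      ((B.1 : ℤ) - A.1) * ((Q.2 : ℤ) - P.2) = ((Q.1 : ℤ) - P.1) * ((B.2 : ℤ) - A.2) := by
    intro A hA B hB P hP Q hQ
    set c : ℤ := ((B.1 : ℤ) - A.1) * ((Q.2 : ℤ) - P.2) - ((Q.1 : ℤ) - P.1) * ((B.2 : ℤ) - A.2) with hc
    have hzero : (c : ZMod p) = 0 := by
      have eA := heq A hA; have eB := heq B hB; have eP := heq P hP; have eQ := heq Q hQ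
      rw [hc]
      push_cast
      rw [eA, eB, eP, eQ]
      push_cast
      ring
    have hdvd : (p : ℤ) ∣ c := by
      exact_mod_cast (ZMod.intCast_zmod_eq_zero_iff_dvd c p).1 hzero
    have habs : |c| < (p : ℤ) := by
      have bA := hcoord A hA; have bB := hcoord B hB; have bP := hcoord P hP; have bQ := hcoord Q hQ
      have h1 : |(B.1 : ℤ) - A.1| ≤ (H : ℤ) - 1 := abs_le.2 ⟨by omega, by omega⟩
      have h2' : |(Q.2 : ℤ) - P.2| ≤ (K : ℤ) - 1 := abs_le.2 ⟨by omega, by omega⟩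
      have h3 : |(Q.1 : ℤ) - P.1| ≤ (H : ℤ) - 1 := abs_le.2 ⟨by omega, by omega⟩
      have h4 : |(B.2 : ℤ) - A.2| ≤ (K : ℤ) - 1 := abs_le.2 ⟨by omega, by omega⟩
      have hH1 : (1 : ℤ) ≤ H := by exact_mod_cast le_trans bA.1 bA.2.1
      have hK1 : (1 : ℤ) ≤ K := by exact_mod_cast le_trans bA.2.2.1 bA.2.2.2
      have h2z : (2 : ℤ) * H * K < p := by exact_mod_cast h2
      have m1 : |((B.1 : ℤ) - A.1) * ((Q.2 : ℤ) - P.2)| ≤ ((H : ℤ) - 1) * ((K : ℤ) - 1) := by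
        rw [abs_mul]; exact mul_le_mul h1 h2' (abs_nonneg _) (by linarith)
      have m2 : |((Q.1 : ℤ) - P.1) * ((B.2 : ℤ) - A.2)| ≤ ((H : ℤ) - 1) * ((K : ℤ) - 1) := by
        rw [abs_mul]; exact mul_le_mul h3 h4 (abs_nonneg _) (by linarith)
      have := abs_sub ((( B.1 : ℤ) - A.1) * ((Q.2 : ℤ) - P.2)) (((Q.1 : ℤ) - P.1) * ((B.2 : ℤ) - A.2))
      nlinarith
    have h0 := Int.eq_zero_of_abs_lt_dvd hdvd habs
    rw [hc] at h0
    linarith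
  -- pick two points with distinct x-coordinates, minimizing the x-gap
  obtain ⟨A0, hA0, B0, hB0, hAB0⟩ := Finset.one_lt_card.1 hr
  have hx0 : A0.1 ≠ B0.1 := fun h => hAB0 (hxinj A0 hA0 B0 hB0 h)
  set Pairs := (F ×ˢ F).filter (fun pr => pr.1.1 < pr.2.1) with hPairs
  have hne : Pairs.Nonempty := by
    rcases Nat.lt_or_ge A0.1 B0.1 with h | h
    · exact ⟨(A0, B0), by simp [hPairs, Finset.mem_filter, Finset.mem_product, hA0, hB0, h]⟩
    · exact ⟨(B0, A0), by
        simp only [hPairs, Finset.mem_filter, Finset.mem_product]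
        exact ⟨⟨hB0, hA0⟩, by omega⟩⟩
  obtain ⟨PQ, hPQmem, hPQmin⟩ := Finset.exists_min_image Pairs (fun pr => pr.2.1 - pr.1.1) hne
  obtain ⟨⟨hPF, hQF⟩, hPQlt⟩ : (PQ.1 ∈ F ∧ PQ.2 ∈ F) ∧ PQ.1.1 < PQ.2.1 := by
    simpa [hPairs, Finset.mem_filter, Finset.mem_product] using hPQmem
  set P := PQ.1 with hPdef
  set Q := PQ.2 with hQdef
  set s : ℕ := Q.1 - P.1 with hs
  set t : ℤ := (Q.2 : ℤ) - P.2 with ht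
  have hspos : 0 < s := by omega
  have hsH : s < H := by
    have := hcoord P hPF; have := hcoord Q hQF; omega
  -- minimality: all x-gaps are ≥ s
  have hgapx : ∀ A ∈ F, ∀ B ∈ F, A ≠ B → A.1 + s ≤ B.1 ∨ B.1 + s ≤ A.1 := by
    intro A hA B hB hAB
    have hx : A.1 ≠ B.1 := fun h => hAB (hxinj A hA B hB h)
    rcases Nat.lt_or_ge A.1 B.1 with h | h
    · left
      have hmem : (A, B) ∈ Pairs := by
        simp only [hPairs, Finset.mem_filter, Finset.mem_product]; exact ⟨⟨hA, hB⟩, h⟩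
      have := hPQmin (A, B) hmem
      simp only at this
      omega
    · right
      have hmem : (B, A) ∈ Pairs := by
        simp only [hPairs, Finset.mem_filter, Finset.mem_product]; exact ⟨⟨hB, hA⟩, by omega⟩
      have := hPQmin (B, A) hmem
      simp only at this
      omega
  have htne : t ≠ 0 := by
    intro h
    have : Q.2 = P.2 := by omega
    have := hyinj Q hQF P hPF this
    rw [this] at hPQlt
    omega
  -- y-gaps are ≥ |t|
  have hgapy : ∀ A ∈ F, ∀ B ∈ F, A ≠ B → A.2 + t.natAbs ≤ B.2 ∨ B.2 + t.natAbs ≤ A.2 := by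
    intro A hA B hB hAB
    have hcr := hcross A hA B hB P hPF Q hQF
    have hsz : ((Q.1 : ℤ) - P.1) = (s : ℤ) := by omega
    rw [hsz] at hcr
    -- hcr : (B.1 - A.1) * t = s * (B.2 - A.2)
    have hnab := congrArg Int.natAbs hcr
    rw [Int.natAbs_mul, Int.natAbs_mul] at hnab
    have hxgap := hgapx A hA B hB hAB
    have hxabs : s ≤ ((B.1 : ℤ) - A.1).natAbs := by omega
    have hineq : s * t.natAbs ≤ s * ((B.2 : ℤ) - A.2).natAbs := by
      calc s * t.natAbs ≤ ((B.1 : ℤ) - A.1).natAbs * t.natAbs :=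
            Nat.mul_le_mul_right _ hxabs
        _ = ((s : ℤ)).natAbs * ((B.2 : ℤ) - A.2).natAbs := hnab
        _ = s * ((B.2 : ℤ) - A.2).natAbs := by rw [Int.natAbs_natCast]
    have := Nat.le_of_mul_le_mul_left hineq hspos
    omega
  -- the ZMod relation t = v * s
  have hts : (t : ZMod p) = v * (s : ℕ) := by
    have eP := heq P hPF
    have eQ := heq Q hQF
    have : ((t : ℤ) : ZMod p) = ((Q.2 : ℕ) : ZMod p) - ((P.2 : ℕ) : ZMod p) := by
      rw [ht]; push_cast; ring
    rw [this, eP, eQ]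
    have hsz : ((s : ℕ) : ZMod p) = ((a + Q.1 : ℕ) : ZMod p) - ((a + P.1 : ℕ) : ZMod p) := by
      have : (s : ℤ) = ((a + Q.1 : ℕ) : ℤ) - ((a + P.1 : ℕ) : ℤ) := by push_cast; omega
      calc ((s : ℕ) : ZMod p) = (((s : ℤ)) : ZMod p) := by push_cast; ring
        _ = _ := by rw [this]; push_cast; ring
    rw [hsz]
    ring
  -- gap counting
  have hcard1 : F.card ≤ (H - 1) / s + 1 :=
    gap_card F (fun q => q.1) s H hspos (fun q hq => ⟨(hcoord q hq).1, (hcoord q hq).2.1⟩)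
      hgapx
  have hcard2 : F.card ≤ (K - 1) / t.natAbs + 1 :=
    gap_card F (fun q => q.2) t.natAbs K (by omega) (fun q hq => ⟨(hcoord q hq).2.2.1, (hcoord q hq).2.2.2⟩)
      hgapy
  exact ⟨s, t, hspos, hsH, htne, hts, hcard1, hcard2⟩
set_option maxHeartbeats 2000000 in
theorem stmt_19 :
    ∃ c : ℝ, 0 < c ∧ ∃ H₀ : ℕ, ∀ (p : ℕ) [Fact p.Prime],
      ∀ H Hs a : ℕ, H₀ ≤ Hs → Hs ≤ H → 0 < a → a + H < p → 16 * Hs ^ 2 * H < p →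
        c * (Hs : ℝ) * (H : ℝ)
          ≤ ((((Finset.Icc 1 H) ×ˢ (Finset.Icc 1 Hs)).image
              fun q => ((q.2 : ℕ) : ZMod p) * (((a + q.1 : ℕ) : ZMod p))⁻¹).card : ℝ) := by
  refine ⟨1/64, by norm_num, 1, ?_⟩
  intro p _ H K a hK1 hKH ha hap hp16
  have hp : p.Prime := Fact.out
  have hH1 : 1 ≤ H := le_trans hK1 hKH
  have hHp : H < p := by omega
  have hKsq : K ^ 2 = K * K := sq K
  rw [hKsq] at hp16
  have h2HK : 2 * H * K < p := by nlinarith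
  have hKp : K < p := by nlinarith
  classical
  set f : ℕ × ℕ → ZMod p := fun q => ((q.2 : ℕ) : ZMod p) * (((a + q.1 : ℕ) : ZMod p))⁻¹ with hf
  set G : Finset (ℕ × ℕ) := Finset.Icc 1 H ×ˢ Finset.Icc 1 K with hG
  set r : ZMod p → ℕ := fun v => (G.filter (fun q => f q = v)).card with hrdef
  have hmemG : ∀ q : ℕ × ℕ, q ∈ G ↔ (1 ≤ q.1 ∧ q.1 ≤ H ∧ 1 ≤ q.2 ∧ q.2 ≤ K) := by
    intro q
    rw [hG, Finset.mem_product, Finset.mem_Icc, Finset.mem_Icc]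
    tauto
  have hGcard : G.card = H * K := by
    rw [hG, Finset.card_product, Nat.card_Icc, Nat.card_Icc]
    simp
  have hunit : ∀ x : ℕ, 1 ≤ x → x ≤ H → ((a + x : ℕ) : ZMod p) ≠ 0 := by
    intro x h1 h2 h
    rw [ZMod.natCast_eq_zero_iff] at h
    have := Nat.le_of_dvd (by omega) h
    omega
  have hynz : ∀ y : ℕ, 1 ≤ y → y ≤ K → ((y : ℕ) : ZMod p) ≠ 0 := by
    intro y h1 h2 h
    rw [ZMod.natCast_eq_zero_iff] at h
    have := Nat.le_of_dvd (by omega) h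
    omega
  have heqv : ∀ v : ZMod p, ∀ q ∈ G, f q = v →
      ((q.2 : ℕ) : ZMod p) = v * ((a + q.1 : ℕ) : ZMod p) := by
    intro v q hq hfq
    have hb := (hmemG q).1 hq
    rw [hf] at hfq
    exact (mul_inv_eq_iff_eq_mul₀ (hunit q.1 hb.1 hb.2.1)).1 hfq
  have hvne : ∀ v ∈ G.image f, v ≠ 0 := by
    intro v hv
    obtain ⟨q, hq, rfl⟩ := Finset.mem_image.1 hv
    have hb := (hmemG q).1 hq
    exact mul_ne_zero (hynz q.2 hb.2.2.1 hb.2.2.2) (inv_ne_zero (hunit q.1 hb.1 hb.2.1))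
  set V := G.image f with hV
  have hsum : ∑ v ∈ V, r v = H * K := by
    rw [← hGcard, hV, hrdef]
    exact (Finset.card_eq_sum_card_image f G).symm
  set Vb := V.filter (fun v => 33 ≤ r v) with hVb
  set Vs := V.filter (fun v => ¬ 33 ≤ r v) with hVs
  have hsplit : ∑ v ∈ Vb, r v + ∑ v ∈ Vs, r v = H * K := by
    rw [hVb, hVs, Finset.sum_filter_add_sum_filter_not, hsum]
  have hsmall : ∑ v ∈ Vs, r v ≤ 32 * V.card := by
    calc ∑ v ∈ Vs, r v ≤ Vs.card • 32 := by
          apply Finset.sum_le_card_nsmul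
          intro v hv
          have := (Finset.mem_filter.1 hv).2
          omega
      _ = Vs.card * 32 := by rw [smul_eq_mul]
      _ ≤ V.card * 32 := Nat.mul_le_mul_right _ (Finset.card_filter_le _ _)
      _ = 32 * V.card := Nat.mul_comm _ _
  have hex : ∀ v ∈ Vb, ∃ st : ℕ × ℤ, 0 < st.1 ∧ st.1 < H ∧ st.2 ≠ 0 ∧
      ((st.2 : ZMod p) = v * (st.1 : ℕ)) ∧
      r v ≤ (H - 1) / st.1 + 1 ∧ r v ≤ (K - 1) / st.2.natAbs + 1 := by
    intro v hv
    obtain ⟨hvV, hv33⟩ := Finset.mem_filter.1 hv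
    obtain ⟨s, t, h1, h2, h3, h4, h5, h6⟩ :=
      class_lemma p H K a v (G.filter (fun q => f q = v))
        (fun q hq => (hmemG q).1 (Finset.mem_filter.1 hq).1)
        (fun q hq => heqv v q (Finset.mem_filter.1 hq).1 (Finset.mem_filter.1 hq).2)
        hHp hKp hap h2HK (hvne v hvV)
        (by
          have hrv : (G.filter (fun q => f q = v)).card = r v := rfl
          rw [hrv]; omega)
    exact ⟨(s, t), h1, h2, h3, h4, h5, h6⟩
  choose st hst1 hst2 hst3 hst4 hst5 hst6 using hex
  set S0 := (H - 1) / 32 with hS0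
  set T0 := (K - 1) / 32 with hT0
  set D := (Finset.Icc 1 S0) ×ˢ ((Finset.Icc 1 T0) ×ˢ (Finset.univ : Finset Bool)) with hD
  set g : ℕ × ℕ × Bool → ℝ :=
    fun d => 2 * (Real.sqrt ((H : ℝ) / d.1) * Real.sqrt ((K : ℝ) / d.2.1)) with hg
  set e : ZMod p → ℕ × ℕ × Bool := fun v =>
    if h : v ∈ Vb then ((st v h).1, (st v h).2.natAbs, decide (0 < (st v h).2))
    else (1, 1, true) with he
  have hgnonneg : ∀ d : ℕ × ℕ × Bool, 0 ≤ g d := by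
    intro d; rw [hg]; positivity
  have hmapsto : ∀ v ∈ Vb, e v ∈ D := by
    intro v h
    have hev : e v = ((st v h).1, (st v h).2.natAbs, decide (0 < (st v h).2)) := by
      rw [he]; simp only [dif_pos h]
    have h33 : 33 ≤ r v := (Finset.mem_filter.1 h).2
    have hs1 : 32 * (st v h).1 ≤ H - 1 :=
      (Nat.le_div_iff_mul_le (hst1 v h)).1 (ge32_of_le_add_one h33 (hst5 v h))
    have ht1 : 32 * (st v h).2.natAbs ≤ K - 1 :=
      (Nat.le_div_iff_mul_le (by have := hst3 v h; omega)).1 (ge32_of_le_add_one h33 (hst6 v h))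
    have hm1 : (st v h).1 ∈ Finset.Icc 1 S0 := by
      refine Finset.mem_Icc.2 ⟨hst1 v h, ?_⟩
      rw [hS0]
      exact (Nat.le_div_iff_mul_le (by norm_num)).2 (by omega)
    have hm2 : (st v h).2.natAbs ∈ Finset.Icc 1 T0 := by
      refine Finset.mem_Icc.2 ⟨by have := hst3 v h; omega, ?_⟩
      rw [hT0]
      exact (Nat.le_div_iff_mul_le (by norm_num)).2 (by omega)
    rw [hev, hD]
    exact Finset.mem_product.2 ⟨hm1, Finset.mem_product.2 ⟨hm2, Finset.mem_univ _⟩⟩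
  have hinj : ∀ x ∈ Vb, ∀ y ∈ Vb, e x = e y → x = y := by
    intro v1 h1 v2 h2 heq'
    rw [he] at heq'
    simp only [dif_pos h1, dif_pos h2, Prod.mk.injEq] at heq'
    obtain ⟨hseq, hteq, hbeq⟩ := heq'
    have hsgn : (0 < (st v1 h1).2) ↔ (0 < (st v2 h2).2) := decide_eq_decide.1 hbeq
    have hteq' : (st v1 h1).2 = (st v2 h2).2 := by
      have n1 := hst3 v1 h1; have n2 := hst3 v2 h2
      omega
    have e1 := hst4 v1 h1
    have e2 := hst4 v2 h2
    rw [hteq', hseq] at e1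
    rw [e2] at e1
    have hsnz : (((st v2 h2).1 : ℕ) : ZMod p) ≠ 0 := by
      intro hz
      rw [ZMod.natCast_eq_zero_iff] at hz
      have h1' := Nat.le_of_dvd (hst1 v2 h2) hz
      have h2' := hst2 v2 h2
      omega
    exact (mul_right_cancel₀ hsnz e1).symm
  have hrineq : ∀ v ∈ Vb, (r v : ℝ) ≤ g (e v) := by
    intro v h
    have h33 : 33 ≤ r v := (Finset.mem_filter.1 h).2
    have hspos : 0 < (st v h).1 := hst1 v h
    have hτpos : 0 < (st v h).2.natAbs := by have := hst3 v h; omega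
    have hsposR : (0:ℝ) < ((st v h).1 : ℝ) := by exact_mod_cast hspos
    have hτposR : (0:ℝ) < ((st v h).2.natAbs : ℝ) := by exact_mod_cast hτpos
    have hX : (r v : ℝ) - 1 ≤ (H : ℝ) / ((st v h).1 : ℝ) := by
      have hnat : r v - 1 ≤ (H - 1) / (st v h).1 := sub_one_le_of_le_add_one (hst5 v h)
      have hc : ((r v - 1 : ℕ) : ℝ) ≤ (((H - 1) / (st v h).1 : ℕ) : ℝ) := Nat.cast_le.2 hnat
      have hc2 : (((H - 1) / (st v h).1 : ℕ) : ℝ) ≤ ((H - 1 : ℕ) : ℝ) / ((st v h).1 : ℝ) :=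
        Nat.cast_div_le
      have hc3 : ((H - 1 : ℕ) : ℝ) / ((st v h).1 : ℝ) ≤ (H : ℝ) / ((st v h).1 : ℝ) := by
        gcongr
        exact_mod_cast Nat.sub_le H 1
      have hc4 : ((r v : ℝ) - 1) ≤ ((r v - 1 : ℕ) : ℝ) := by
        have : 1 ≤ r v := by omega
        push_cast [this]
        linarith
      linarith
    have hY : (r v : ℝ) - 1 ≤ (K : ℝ) / ((st v h).2.natAbs : ℝ) := by
      have hnat : r v - 1 ≤ (K - 1) / (st v h).2.natAbs := sub_one_le_of_le_add_one (hst6 v h)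
      have hc : ((r v - 1 : ℕ) : ℝ) ≤ (((K - 1) / (st v h).2.natAbs : ℕ) : ℝ) := Nat.cast_le.2 hnat
      have hc2 : (((K - 1) / (st v h).2.natAbs : ℕ) : ℝ) ≤ ((K - 1 : ℕ) : ℝ) / ((st v h).2.natAbs : ℝ) :=
        Nat.cast_div_le
      have hc3 : ((K - 1 : ℕ) : ℝ) / ((st v h).2.natAbs : ℝ) ≤ (K : ℝ) / ((st v h).2.natAbs : ℝ) := by
        gcongr
        exact_mod_cast Nat.sub_le K 1
      have hc4 : ((r v : ℝ) - 1) ≤ ((r v - 1 : ℕ) : ℝ) := by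
        have : 1 ≤ r v := by omega
        push_cast [this]
        linarith
      linarith
    have hr1 : (32:ℝ) ≤ (r v : ℝ) - 1 := by
      have : (33:ℝ) ≤ (r v : ℝ) := by exact_mod_cast h33
      linarith
    have hsq : ((r v : ℝ) - 1)^2 ≤ ((H : ℝ) / ((st v h).1 : ℝ)) * ((K : ℝ) / ((st v h).2.natAbs : ℝ)) := by
      nlinarith
    have hle : (r v : ℝ) - 1 ≤
        Real.sqrt (((H : ℝ) / ((st v h).1 : ℝ)) * ((K : ℝ) / ((st v h).2.natAbs : ℝ))) := by
      rw [← Real.sqrt_sq (by linarith : (0:ℝ) ≤ (r v : ℝ) - 1)]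
      exact Real.sqrt_le_sqrt hsq
    have hsplit' : Real.sqrt (((H : ℝ) / ((st v h).1 : ℝ)) * ((K : ℝ) / ((st v h).2.natAbs : ℝ)))
        = Real.sqrt ((H : ℝ) / ((st v h).1 : ℝ)) * Real.sqrt ((K : ℝ) / ((st v h).2.natAbs : ℝ)) :=
      Real.sqrt_mul (by positivity) _
    have hev : g (e v) = 2 * (Real.sqrt ((H : ℝ) / ((st v h).1 : ℝ)) *
        Real.sqrt ((K : ℝ) / ((st v h).2.natAbs : ℝ))) := by
      simp only [he, dif_pos h, hg]
    rw [hev]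
    rw [hsplit'] at hle
    linarith
  -- bound the sum over D
  have hsqsumS : ∑ x ∈ Finset.Icc 1 S0, Real.sqrt ((H : ℝ) / x) ≤ 2 * Real.sqrt ((H : ℝ) * S0) := by
    have h1 : ∀ x ∈ Finset.Icc 1 S0, Real.sqrt ((H : ℝ) / x) = Real.sqrt (H : ℝ) * (1 / Real.sqrt x) := by
      intro x _
      rw [Real.sqrt_div (by positivity), div_eq_mul_one_div]
    rw [Finset.sum_congr rfl h1, ← Finset.mul_sum]
    calc Real.sqrt (H:ℝ) * ∑ x ∈ Finset.Icc 1 S0, (1 / Real.sqrt x)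
        ≤ Real.sqrt (H:ℝ) * (2 * Real.sqrt S0) :=
          mul_le_mul_of_nonneg_left (sum_one_div_sqrt S0) (Real.sqrt_nonneg _)
      _ = 2 * Real.sqrt ((H:ℝ) * S0) := by rw [Real.sqrt_mul (by positivity)]; ring
  have hsqsumT : ∑ x ∈ Finset.Icc 1 T0, Real.sqrt ((K : ℝ) / x) ≤ 2 * Real.sqrt ((K : ℝ) * T0) := by
    have h1 : ∀ x ∈ Finset.Icc 1 T0, Real.sqrt ((K : ℝ) / x) = Real.sqrt (K : ℝ) * (1 / Real.sqrt x) := by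
      intro x _
      rw [Real.sqrt_div (by positivity), div_eq_mul_one_div]
    rw [Finset.sum_congr rfl h1, ← Finset.mul_sum]
    calc Real.sqrt (K:ℝ) * ∑ x ∈ Finset.Icc 1 T0, (1 / Real.sqrt x)
        ≤ Real.sqrt (K:ℝ) * (2 * Real.sqrt T0) :=
          mul_le_mul_of_nonneg_left (sum_one_div_sqrt T0) (Real.sqrt_nonneg _)
      _ = 2 * Real.sqrt ((K:ℝ) * T0) := by rw [Real.sqrt_mul (by positivity)]; ring
  have hDsum : ∑ d ∈ D, g d = 4 * ((∑ x ∈ Finset.Icc 1 S0, Real.sqrt ((H:ℝ)/x)) *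
      (∑ y ∈ Finset.Icc 1 T0, Real.sqrt ((K:ℝ)/y))) := by
    rw [hD, Finset.sum_product]
    have inner : ∀ x ∈ Finset.Icc 1 S0,
        (∑ y ∈ (Finset.Icc 1 T0 ×ˢ (Finset.univ : Finset Bool)), g (x, y))
        = ∑ τ ∈ Finset.Icc 1 T0, 4 * (Real.sqrt ((H:ℝ)/x) * Real.sqrt ((K:ℝ)/τ)) := by
      intro x _
      rw [Finset.sum_product]
      apply Finset.sum_congr rfl
      intro τ _
      rw [hg]
      simp only [Finset.sum_const, Finset.card_univ, Fintype.card_bool, smul_eq_mul]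
      ring
    rw [Finset.sum_congr rfl inner]
    rw [Finset.sum_mul_sum]
    rw [Finset.mul_sum]
    apply Finset.sum_congr rfl
    intro x _
    rw [Finset.mul_sum]
  have hS0le : (S0 : ℝ) ≤ (H : ℝ) / 32 := by
    calc (S0 : ℝ) ≤ ((H - 1 : ℕ) : ℝ) / (32 : ℕ) := by rw [hS0]; exact_mod_cast Nat.cast_div_le
      _ ≤ (H : ℝ) / 32 := by
          push_cast
          gcongr
          exact_mod_cast Nat.sub_le H 1
  have hT0le : (T0 : ℝ) ≤ (K : ℝ) / 32 := by
    calc (T0 : ℝ) ≤ ((K - 1 : ℕ) : ℝ) / (32 : ℕ) := by rw [hT0]; exact_mod_cast Nat.cast_div_le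
      _ ≤ (K : ℝ) / 32 := by
          push_cast
          gcongr
          exact_mod_cast Nat.sub_le K 1
  have hprodle : Real.sqrt ((H:ℝ) * S0) * Real.sqrt ((K:ℝ) * T0) ≤ (H : ℝ) * K / 32 := by
    rw [← Real.sqrt_mul (by positivity)]
    have hle2 : (H:ℝ) * S0 * ((K:ℝ) * T0) ≤ ((H:ℝ) * K / 32)^2 := by
      have h0 : (0:ℝ) ≤ (H:ℝ) := by positivity
      have h0' : (0:ℝ) ≤ (K:ℝ) := by positivity
      have hS0n : (0:ℝ) ≤ (S0:ℝ) := by positivity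
      have hT0n : (0:ℝ) ≤ (T0:ℝ) := by positivity
      have m1 : (H:ℝ)*(S0:ℝ) ≤ (H:ℝ)*((H:ℝ)/32) := mul_le_mul_of_nonneg_left hS0le h0
      have m2 : (K:ℝ)*(T0:ℝ) ≤ (K:ℝ)*((K:ℝ)/32) := mul_le_mul_of_nonneg_left hT0le h0'
      have m3 : (H:ℝ)*(S0:ℝ)*((K:ℝ)*(T0:ℝ)) ≤ ((H:ℝ)*((H:ℝ)/32))*((K:ℝ)*((K:ℝ)/32)) :=
        mul_le_mul m1 m2 (by positivity) (by positivity)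
      have m4 : ((H:ℝ)*((H:ℝ)/32))*((K:ℝ)*((K:ℝ)/32)) = ((H:ℝ)*K/32)^2 := by ring
      linarith
    calc Real.sqrt ((H:ℝ) * S0 * ((K:ℝ) * T0)) ≤ Real.sqrt (((H:ℝ) * K / 32)^2) :=
          Real.sqrt_le_sqrt hle2
      _ = (H:ℝ) * K / 32 := Real.sqrt_sq (by positivity)
  have hbigR : (∑ v ∈ Vb, (r v : ℝ)) ≤ (H : ℝ) * K / 2 := by
    have step1 : (∑ v ∈ Vb, (r v : ℝ)) ≤ ∑ v ∈ Vb, g (e v) :=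
      Finset.sum_le_sum hrineq
    have step2 : ∑ v ∈ Vb, g (e v) = ∑ d ∈ Vb.image e, g d := (Finset.sum_image hinj).symm
    have step3 : ∑ d ∈ Vb.image e, g d ≤ ∑ d ∈ D, g d :=
      Finset.sum_le_sum_of_subset_of_nonneg
        (Finset.image_subset_iff.2 hmapsto) (fun d _ _ => hgnonneg d)
    have hsn : (0:ℝ) ≤ ∑ x ∈ Finset.Icc 1 S0, Real.sqrt ((H:ℝ)/x) :=
      Finset.sum_nonneg (fun x _ => Real.sqrt_nonneg _)
    have htn : (0:ℝ) ≤ ∑ y ∈ Finset.Icc 1 T0, Real.sqrt ((K:ℝ)/y) :=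
      Finset.sum_nonneg (fun x _ => Real.sqrt_nonneg _)
    have step4 : ∑ d ∈ D, g d ≤ 4 * ((2 * Real.sqrt ((H:ℝ) * S0)) * (2 * Real.sqrt ((K:ℝ) * T0))) := by
      rw [hDsum]
      have := mul_le_mul hsqsumS hsqsumT htn (by positivity)
      linarith
    have step5 : 4 * ((2 * Real.sqrt ((H:ℝ) * S0)) * (2 * Real.sqrt ((K:ℝ) * T0))) ≤ (H:ℝ) * K / 2 := by
      have := hprodle
      nlinarith [Real.sqrt_nonneg ((H:ℝ) * S0), Real.sqrt_nonneg ((K:ℝ) * T0)]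
    linarith
  -- final assembly
  have hcast : ((H:ℝ) * K) = (∑ v ∈ Vb, (r v : ℝ)) + (∑ v ∈ Vs, (r v : ℝ)) := by
    have h := congrArg (fun n : ℕ => (n : ℝ)) hsplit
    push_cast at h
    linarith [h]
  have hVscast : (∑ v ∈ Vs, (r v : ℝ)) ≤ 32 * (V.card : ℝ) := by
    have h := (Nat.cast_le (α := ℝ)).2 hsmall
    push_cast at h
    linarith [h]
  have hgoal : ((H:ℝ) * K) / 64 ≤ (V.card : ℝ) := by linarith
  have : (1:ℝ)/64 * K * H = (H:ℝ) * K / 64 := by ring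
  rw [this]
  exact hgoal
end
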